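/- Let μ be a probability measure on ℝ^d, define the kernel k(x, y) = ∫_{ℝ^d} cos(⟨ω, x − y⟩) dμ(ω), and let P, Q be probability measures on ℝ^d. Then MMD²_k(P, Q) = ∫_{ℝ^d} | φ_P(ω) − φ_Q(ω) |² dμ(ω), where φ_P(ω) = ∫ exp(i·⟨ω, x⟩) dP(x) ∈ ℂ is the characteristic function of P and |·| is the complex modulus. In particular, MMD²_k(P, Q) ≥ 0, with equality when P = Q. -/

import Mathlib

open MeasureTheory Real
open scoped RealInnerProductSpace

namespace Stmt14Aux

variable {d : ℕ}

local notation "E" => EuclideanSpace ℝ (Fin d)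

lemma integrable_bdd {α : Type*} [MeasurableSpace α] {ν : Measure α} [IsFiniteMeasure ν]
    {f : α → ℝ} (hm : AEStronglyMeasurable f ν) (C : ℝ) (h : ∀ a, |f a| ≤ C) :
    Integrable f ν :=
  (integrable_const C).mono' hm (Filter.Eventually.of_forall fun a => by simpa using h a)

lemma cont_cos : Continuous fun p : E × E => Real.cos ⟪p.1, p.2⟫ :=
  Real.continuous_cos.comp continuous_inner

lemma cont_sin : Continuous fun p : E × E => Real.sin ⟪p.1, p.2⟫ :=
  Real.continuous_sin.comp continuous_inner

lemma sm_Cc (ν : Measure E) [SFinite ν] :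
    StronglyMeasurable fun ω : E => ∫ x, Real.cos ⟪ω, x⟫ ∂ν :=
  cont_cos.stronglyMeasurable.integral_prod_right'

lemma sm_Ss (ν : Measure E) [SFinite ν] :
    StronglyMeasurable fun ω : E => ∫ x, Real.sin ⟪ω, x⟫ ∂ν :=
  cont_sin.stronglyMeasurable.integral_prod_right'

lemma abs_Cc_le (ν : Measure E) [IsProbabilityMeasure ν] (ω : E) :
    |∫ x, Real.cos ⟪ω, x⟫ ∂ν| ≤ 1 := by
  have := norm_integral_le_of_norm_le_const (μ := ν)
    (f := fun x : E => Real.cos ⟪ω, x⟫) (C := 1)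
    (Filter.Eventually.of_forall fun x => by simpa using Real.abs_cos_le_one _)
  simpa using this

lemma abs_Ss_le (ν : Measure E) [IsProbabilityMeasure ν] (ω : E) :
    |∫ x, Real.sin ⟪ω, x⟫ ∂ν| ≤ 1 := by
  have := norm_integral_le_of_norm_le_const (μ := ν)
    (f := fun x : E => Real.sin ⟪ω, x⟫) (C := 1)
    (Filter.Eventually.of_forall fun x => by simpa using Real.abs_sin_le_one _)
  simpa using this

lemma int_cos (ν : Measure E) [IsProbabilityMeasure ν] (ω : E) :
    Integrable (fun x : E => Real.cos ⟪ω, x⟫) ν :=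
  integrable_bdd (Continuous.aestronglyMeasurable
    (Real.continuous_cos.comp (continuous_const.inner continuous_id))) 1
    (fun _ => Real.abs_cos_le_one _)

lemma int_sin (ν : Measure E) [IsProbabilityMeasure ν] (ω : E) :
    Integrable (fun x : E => Real.sin ⟪ω, x⟫) ν :=
  integrable_bdd (Continuous.aestronglyMeasurable
    (Real.continuous_sin.comp (continuous_const.inner continuous_id))) 1
    (fun _ => Real.abs_sin_le_one _)

/-- The double integral of the random-feature kernel factors through the
frequency measure. -/
lemma key (μ : Measure E) [IsProbabilityMeasure μ] (P Q : Measure E)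
    [IsProbabilityMeasure P] [IsProbabilityMeasure Q] :
    ∫ x, ∫ y, (∫ ω, Real.cos ⟪ω, x - y⟫ ∂μ) ∂Q ∂P
      = ∫ ω, ((∫ x, Real.cos ⟪ω, x⟫ ∂P) * (∫ y, Real.cos ⟪ω, y⟫ ∂Q)
        + (∫ x, Real.sin ⟪ω, x⟫ ∂P) * (∫ y, Real.sin ⟪ω, y⟫ ∂Q)) ∂μ := by
  have hA : ∀ x : E, ∫ y, (∫ ω, Real.cos ⟪ω, x - y⟫ ∂μ) ∂Q
      = ∫ ω, (Real.cos ⟪ω, x⟫ * (∫ y, Real.cos ⟪ω, y⟫ ∂Q)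
          + Real.sin ⟪ω, x⟫ * (∫ y, Real.sin ⟪ω, y⟫ ∂Q)) ∂μ := by
    intro x
    have hint : Integrable (Function.uncurry fun (y ω : E) => Real.cos ⟪ω, x - y⟫)
        (Q.prod μ) := by
      apply integrable_bdd _ 1 (fun p => Real.abs_cos_le_one _)
      exact Continuous.aestronglyMeasurable (by
        exact Real.continuous_cos.comp
          (continuous_snd.inner (continuous_const.sub continuous_fst)))
    rw [integral_integral_swap hint]
    refine integral_congr_ae (Filter.Eventually.of_forall fun ω => ?_)
    simp only [inner_sub_right, Real.cos_sub]
    rw [integral_add ((int_cos Q ω).const_mul _) ((int_sin Q ω).const_mul _),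
      integral_const_mul, integral_const_mul]
  simp_rw [hA]
  have hint2 : Integrable (Function.uncurry fun (x ω : E) =>
      Real.cos ⟪ω, x⟫ * (∫ y, Real.cos ⟪ω, y⟫ ∂Q)
        + Real.sin ⟪ω, x⟫ * (∫ y, Real.sin ⟪ω, y⟫ ∂Q)) (P.prod μ) := by
    apply integrable_bdd _ 2
    · intro p
      calc |Real.cos ⟪p.2, p.1⟫ * (∫ y, Real.cos ⟪p.2, y⟫ ∂Q)
          + Real.sin ⟪p.2, p.1⟫ * (∫ y, Real.sin ⟪p.2, y⟫ ∂Q)|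
          ≤ |Real.cos ⟪p.2, p.1⟫ * (∫ y, Real.cos ⟪p.2, y⟫ ∂Q)|
            + |Real.sin ⟪p.2, p.1⟫ * (∫ y, Real.sin ⟪p.2, y⟫ ∂Q)| := abs_add_le _ _
        _ ≤ 1 * 1 + 1 * 1 := by
            rw [abs_mul, abs_mul]
            gcongr
            · exact Real.abs_cos_le_one _
            · exact abs_Cc_le Q _
            · exact Real.abs_sin_le_one _
            · exact abs_Ss_le Q _
        _ = 2 := by norm_num
    · apply AEStronglyMeasurable.add
      · exact ((cont_cos.comp continuous_swap).stronglyMeasurable.mul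
          ((sm_Cc Q).comp_measurable measurable_snd)).aestronglyMeasurable
      · exact ((cont_sin.comp continuous_swap).stronglyMeasurable.mul
          ((sm_Ss Q).comp_measurable measurable_snd)).aestronglyMeasurable
  rw [integral_integral_swap hint2]
  refine integral_congr_ae (Filter.Eventually.of_forall fun ω => ?_)
  dsimp only
  rw [integral_add ((int_cos P ω).mul_const _) ((int_sin P ω).mul_const _),
    integral_mul_const, integral_mul_const]

lemma int_g (μ : Measure E) [IsProbabilityMeasure μ] (P Q : Measure E)
    [IsProbabilityMeasure P] [IsProbabilityMeasure Q] :
    Integrable (fun ω : E => (∫ x, Real.cos ⟪ω, x⟫ ∂P) * (∫ y, Real.cos ⟪ω, y⟫ ∂Q)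
        + (∫ x, Real.sin ⟪ω, x⟫ ∂P) * (∫ y, Real.sin ⟪ω, y⟫ ∂Q)) μ := by
  apply integrable_bdd
    ((((sm_Cc P).mul (sm_Cc Q)).add ((sm_Ss P).mul (sm_Ss Q))).aestronglyMeasurable) 2
  intro ω
  calc |(∫ x, Real.cos ⟪ω, x⟫ ∂P) * (∫ y, Real.cos ⟪ω, y⟫ ∂Q)
      + (∫ x, Real.sin ⟪ω, x⟫ ∂P) * (∫ y, Real.sin ⟪ω, y⟫ ∂Q)|
      ≤ |(∫ x, Real.cos ⟪ω, x⟫ ∂P) * (∫ y, Real.cos ⟪ω, y⟫ ∂Q)|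
        + |(∫ x, Real.sin ⟪ω, x⟫ ∂P) * (∫ y, Real.sin ⟪ω, y⟫ ∂Q)| := abs_add_le _ _
    _ ≤ 1 * 1 + 1 * 1 := by
        rw [abs_mul, abs_mul]
        gcongr
        · exact abs_Cc_le P _
        · exact abs_Cc_le Q _
        · exact abs_Ss_le P _
        · exact abs_Ss_le Q _
    _ = 2 := by norm_num

lemma int_exp (ν : Measure E) [IsProbabilityMeasure ν] (ω : E) :
    Integrable (fun x : E => Complex.exp (Complex.I * (⟪ω, x⟫ : ℝ))) ν := by
  refine (integrable_const (1 : ℝ)).mono'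
    (Continuous.aestronglyMeasurable ?_)
    (Filter.Eventually.of_forall fun x => ?_)
  · exact Complex.continuous_exp.comp
      (continuous_const.mul (Complex.continuous_ofReal.comp
        (continuous_const.inner continuous_id)))
  · simp [Complex.norm_exp]

lemma char_re (ν : Measure E) [IsProbabilityMeasure ν] (ω : E) :
    (∫ x, Complex.exp (Complex.I * (⟪ω, x⟫ : ℝ)) ∂ν).re = ∫ x, Real.cos ⟪ω, x⟫ ∂ν := by
  rw [← RCLike.re_to_complex, ← integral_re (int_exp ν ω)]
  refine integral_congr_ae (Filter.Eventually.of_forall fun x => ?_)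
  simp only [RCLike.re_to_complex, mul_comm Complex.I, Complex.exp_ofReal_mul_I_re]

lemma char_im (ν : Measure E) [IsProbabilityMeasure ν] (ω : E) :
    (∫ x, Complex.exp (Complex.I * (⟪ω, x⟫ : ℝ)) ∂ν).im = ∫ x, Real.sin ⟪ω, x⟫ ∂ν := by
  rw [← RCLike.im_to_complex, ← integral_im (int_exp ν ω)]
  refine integral_congr_ae (Filter.Eventually.of_forall fun x => ?_)
  simp only [RCLike.im_to_complex, mul_comm Complex.I, Complex.exp_ofReal_mul_I_im]

end Stmt14Aux

open Stmt14Aux in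
/-- Spectral representation of the MMD for the random-feature kernel
`k(x,y) = ∫ cos⟨ω, x−y⟩ dμ(ω)`: `MMD²_k(P,Q) = ∫ |φ_P(ω) − φ_Q(ω)|² dμ(ω)`,
where `φ_P` is the characteristic function of `P`. In particular the squared
MMD is nonnegative, and it vanishes when `P = Q`. -/
theorem stmt_14 {d : ℕ} (μ : Measure (EuclideanSpace ℝ (Fin d))) [IsProbabilityMeasure μ]
    (k : EuclideanSpace ℝ (Fin d) → EuclideanSpace ℝ (Fin d) → ℝ)
    (hk : ∀ x y, k x y = ∫ ω, Real.cos ⟪ω, x - y⟫ ∂μ)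
    (P Q : Measure (EuclideanSpace ℝ (Fin d)))
    [IsProbabilityMeasure P] [IsProbabilityMeasure Q]
    (φP φQ : EuclideanSpace ℝ (Fin d) → ℂ)
    (hφP : ∀ ω, φP ω = ∫ x, Complex.exp (Complex.I * (⟪ω, x⟫ : ℝ)) ∂P)
    (hφQ : ∀ ω, φQ ω = ∫ x, Complex.exp (Complex.I * (⟪ω, x⟫ : ℝ)) ∂Q)
    (mmd2 : ℝ)
    (hmmd2 : mmd2 = (∫ x, ∫ x', k x x' ∂P ∂P) - 2 * (∫ x, ∫ y, k x y ∂Q ∂P)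
      + ∫ y, ∫ y', k y y' ∂Q ∂Q) :
    mmd2 = ∫ ω, ‖φP ω - φQ ω‖ ^ 2 ∂μ ∧
      0 ≤ mmd2 ∧ (P = Q → mmd2 = 0) := by
  have h1 : (∫ x, ∫ x', k x x' ∂P ∂P)
      = ∫ ω, ((∫ x, Real.cos ⟪ω, x⟫ ∂P) * (∫ y, Real.cos ⟪ω, y⟫ ∂P)
        + (∫ x, Real.sin ⟪ω, x⟫ ∂P) * (∫ y, Real.sin ⟪ω, y⟫ ∂P)) ∂μ := by
    simp_rw [hk]; exact key μ P P
  have h2 : (∫ x, ∫ y, k x y ∂Q ∂P)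
      = ∫ ω, ((∫ x, Real.cos ⟪ω, x⟫ ∂P) * (∫ y, Real.cos ⟪ω, y⟫ ∂Q)
        + (∫ x, Real.sin ⟪ω, x⟫ ∂P) * (∫ y, Real.sin ⟪ω, y⟫ ∂Q)) ∂μ := by
    simp_rw [hk]; exact key μ P Q
  have h3 : (∫ y, ∫ y', k y y' ∂Q ∂Q)
      = ∫ ω, ((∫ x, Real.cos ⟪ω, x⟫ ∂Q) * (∫ y, Real.cos ⟪ω, y⟫ ∂Q)
        + (∫ x, Real.sin ⟪ω, x⟫ ∂Q) * (∫ y, Real.sin ⟪ω, y⟫ ∂Q)) ∂μ := by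
    simp_rw [hk]; exact key μ Q Q
  have hmain : mmd2 = ∫ ω, ‖φP ω - φQ ω‖ ^ 2 ∂μ := by
    have iPQ2 : Integrable (fun ω => 2 * ((∫ x, Real.cos ⟪ω, x⟫ ∂P) * (∫ y, Real.cos ⟪ω, y⟫ ∂Q)
        + (∫ x, Real.sin ⟪ω, x⟫ ∂P) * (∫ y, Real.sin ⟪ω, y⟫ ∂Q))) μ :=
      (int_g μ P Q).const_mul 2
    have hsub : Integrable (fun ω => ((∫ x, Real.cos ⟪ω, x⟫ ∂P) * (∫ y, Real.cos ⟪ω, y⟫ ∂P)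
        + (∫ x, Real.sin ⟪ω, x⟫ ∂P) * (∫ y, Real.sin ⟪ω, y⟫ ∂P))
        - 2 * ((∫ x, Real.cos ⟪ω, x⟫ ∂P) * (∫ y, Real.cos ⟪ω, y⟫ ∂Q)
        + (∫ x, Real.sin ⟪ω, x⟫ ∂P) * (∫ y, Real.sin ⟪ω, y⟫ ∂Q))) μ :=
      (int_g μ P P).sub iPQ2
    rw [hmmd2, h1, h2, h3, ← integral_const_mul, ← integral_sub (int_g μ P P) iPQ2,
      ← integral_add hsub (int_g μ Q Q)]
    refine integral_congr_ae (Filter.Eventually.of_forall fun ω => ?_)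
    dsimp only
    rw [Complex.sq_norm, Complex.normSq_apply, Complex.sub_re, Complex.sub_im,
      hφP, hφQ, char_re, char_im, char_re, char_im]
    ring
  refine ⟨hmain, ?_, ?_⟩
  · rw [hmain]
    exact integral_nonneg fun ω => by positivity
  · intro hpq
    have hφ : ∀ ω, φP ω = φQ ω := fun ω => by rw [hφP, hφQ, hpq]
    rw [hmain]
    simp [hφ]
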